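/- With x, y ∈ SL_6(F_{q^2}) the explicit matrices of equation (2.1) (depending on a with c = a^{q+1}−4 ≠ 0), x^2 = I and y^3 = I. -/

import Mathlib

@[simp] lemma stmt15_cons_val_five {α : Type*} {m : ℕ} (x : α) (u : Fin (m + 5) → α) :
    Matrix.vecCons x u 5 =
      Matrix.vecHead (Matrix.vecTail (Matrix.vecTail (Matrix.vecTail (Matrix.vecTail u)))) :=
  rfl

set_option maxHeartbeats 1000000 in
lemma stmt15_aux (F : Type*) [Field F] (β γ : F) :
    (!![0,0,1,0,0,0; 1,0,0,0,0,0; 0,1,0,0,0,0;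
        0,0,0,β,γ-β^2,1-β*γ; 0,0,0,1,-β,-γ; 0,0,0,0,1,0] :
      Matrix (Fin 6) (Fin 6) F) ^ 3 = 1 := by
  set M : Matrix (Fin 6) (Fin 6) F :=
    !![0,0,1,0,0,0; 1,0,0,0,0,0; 0,1,0,0,0,0;
       0,0,0,β,γ-β^2,1-β*γ; 0,0,0,1,-β,-γ; 0,0,0,0,1,0] with hM
  have hz : M * M = !![0,1,0,0,0,0; 0,0,1,0,0,0; 1,0,0,0,0,0;
      0,0,0,γ,1-β*γ,β-γ^2; 0,0,0,0,0,1; 0,0,0,1,-β,-γ] := by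
    rw [hM]
    ext i j
    fin_cases i <;> fin_cases j <;>
      simp [Matrix.mul_apply, Fin.sum_univ_six, Matrix.vecHead, Matrix.vecTail] <;> ring
  rw [pow_succ, pow_succ, pow_one, hz, hM]
  ext i j
  fin_cases i <;> fin_cases j <;>
    simp [Matrix.mul_apply, Fin.sum_univ_six, Matrix.one_apply, Matrix.vecHead, Matrix.vecTail] <;>
    ring

set_option maxHeartbeats 1000000 in
lemma stmt15_xsq (F : Type*) [Field F] (a : F) :
    (!![1, 0, 0, 0, 0, 0;
        0, 1, 0, 0, 0, 0;
        0, 0, 0, 1, 0, 0;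
        0, 0, 1, 0, 0, 0;
        0, 0, 0, 0, -1, a;
        0, 0, 0, 0, 0, 1] : Matrix (Fin 6) (Fin 6) F) ^ 2 = 1 := by
  rw [pow_two]
  ext i j
  fin_cases i <;> fin_cases j <;>
    simp [Matrix.mul_apply, Fin.sum_univ_six, Matrix.one_apply, Matrix.vecHead, Matrix.vecTail]

/-- The generators `x`, `y` of equation (2.1) satisfy `x² = I` and `y³ = I`. -/
theorem stmt_15 (q : ℕ) (hq : IsPrimePow q) (F : Type*) [Field F] [Fintype F]
    (hF : Fintype.card F = q ^ 2) (a b c d e : F) (ha : a ^ q ≠ a)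
    (hb : b = 2 * a - a ^ (2 * q))
    (hc : c = a ^ (q + 1) - 4) (hc0 : c ≠ 0)
    (hd : d = 2 * a ^ 3 + 2 * a ^ (3 * q) - 12 * a ^ (q + 1) + 16)
    (he : e = -a ^ (4 * q) + 6 * a ^ (2 * q + 1) - a ^ (q + 3) - 8 * a ^ q)
    (x y : Matrix (Fin 6) (Fin 6) F)
    (hx : x = !![1, 0, 0, 0, 0, 0;
                 0, 1, 0, 0, 0, 0;
                 0, 0, 0, 1, 0, 0;
                 0, 0, 1, 0, 0, 0;
                 0, 0, 0, 0, -1, a;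
                 0, 0, 0, 0, 0, 1])
    (hy : y = !![0, 0, 1, 0, 0, 0;
                 1, 0, 0, 0, 0, 0;
                 0, 1, 0, 0, 0, 0;
                 0, 0, 0, b / c, e / c ^ 2, d / c ^ 2;
                 0, 0, 0, 1, -(b / c), -(b ^ q / c);
                 0, 0, 0, 0, 1, 0]) :
    x ^ 2 = 1 ∧ y ^ 3 = 1 := by
  -- Frobenius setup
  obtain ⟨p, k, hp, hk, hpk⟩ := hq
  have hp' : Fact p.Prime := ⟨hp.nat_prime⟩
  have hchar : CharP F p := by
    refine (CharP.charP_iff_prime_eq_zero hp'.out).2 ?_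
    have h0 : ((Fintype.card F : ℕ) : F) = 0 := Nat.cast_card_eq_zero F
    have hpow : ((p : F)) ^ (2 * k) = 0 := by
      rw [hF, ← hpk] at h0; push_cast at h0 ⊢; rw [← h0]; ring
    have h2k : 2 * k ≠ 0 := by positivity
    exact (pow_eq_zero_iff h2k).mp hpow
  have hqq : ∀ u : F, u ^ q = iterateFrobenius F p k u := fun u => by
    rw [iterateFrobenius_def, hpk]
  have ht : (a ^ q) ^ q = a := by
    rw [← pow_mul, ← sq, ← hF, FiniteField.pow_card]
  have hbq : b ^ q = 2 * a ^ q - a ^ 2 := by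
    rw [hb, hqq, map_sub, map_mul, map_ofNat, map_pow, ← hqq,
      show 2 * q = q * 2 from mul_comm 2 q, pow_mul, ht]
  -- exponent rewrites
  have h2q : a ^ (2 * q) = (a ^ q) ^ 2 := by rw [mul_comm, pow_mul]
  have h3q : a ^ (3 * q) = (a ^ q) ^ 3 := by rw [mul_comm, pow_mul]
  have h4q : a ^ (4 * q) = (a ^ q) ^ 4 := by rw [mul_comm, pow_mul]
  have hq1 : a ^ (q + 1) = a ^ q * a := by rw [pow_add, pow_one]
  have h21 : a ^ (2 * q + 1) = (a ^ q) ^ 2 * a := by rw [pow_add, pow_one, h2q]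
  have h13 : a ^ (q + 3) = a ^ q * a ^ 3 := by rw [pow_add]
  -- key identities
  have key1 : b ^ 2 + e = b ^ q * c := by
    rw [hbq, hb, he, hc, h2q, h4q, h21, h13, hq1]; ring
  have key2 : d + b * b ^ q = c ^ 2 := by
    rw [hbq, hb, hd, hc, h2q, h3q, hq1]; ring
  have h1 : e / c ^ 2 = b ^ q / c - (b / c) ^ 2 := by
    field_simp
    linear_combination key1
  have h2 : d / c ^ 2 = 1 - (b / c) * (b ^ q / c) := by
    field_simp
    linear_combination key2
  constructor
  · rw [hx]; exact stmt15_xsq F a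
  · rw [hy, h1, h2,
      show -(b / c) = -(b/c) from rfl]
    exact stmt15_aux F (b / c) (b ^ q / c)
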